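/- In the comaximal graph of the Heisenberg Lie algebra over F_q, the center Z = span(h) is an isolated vertex, and the induced subgraph on the noncentral one-dimensional subalgebras is the complete multipartite graph with q+1 parts of size q. -/

import Mathlib

open Module

/-- A submodule closed under the bracket, as a Lie subalgebra. -/
def subalgOf (F : Type*) [Field F] (H : Type*) [LieRing H] [LieAlgebra F H]
    (W : Submodule F H) (hcl : ∀ x ∈ W, ∀ y ∈ W, ⁅x, y⁆ ∈ W) : LieSubalgebra F H :=
  { W with lie_mem' := fun {x y} hx hy => hcl x hx y hy }

theorem heisenberg_comaximal_structure
    (F : Type*) [Field F] [Fintype F] (q : ℕ) (hq : Fintype.card F = q)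
    (H : Type*) [LieRing H] [LieAlgebra F H]
    (e f h : H) (hspan : Submodule.span F {e, f, h} = ⊤)
    (hdim : finrank F H = 3)
    (hef : ⁅e, f⁆ = h) (heh : ⁅e, h⁆ = 0) (hfh : ⁅f, h⁆ = 0) :
    (∀ B : LieSubalgebra F H, B ≠ ⊥ → B ≠ ⊤ → B ≠ LieSubalgebra.lieSpan F H {h} →
        LieSubalgebra.lieSpan F H {h} ⊔ B ≠ ⊤) ∧
    (∀ A B : LieSubalgebra F H, finrank F A = 1 → finrank F B = 1 →
        A ≠ LieSubalgebra.lieSpan F H {h} → B ≠ LieSubalgebra.lieSpan F H {h} →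
        A ≠ B →
        (A ⊔ B = ⊤ ↔
          ∀ P : LieSubalgebra F H, finrank F P = 2 → ¬(A ≤ P ∧ B ≤ P))) ∧
    Nat.card {P : LieSubalgebra F H // finrank F P = 2} = q + 1 ∧
    (∀ P : LieSubalgebra F H, finrank F P = 2 →
        Nat.card {A : LieSubalgebra F H // finrank F A = 1 ∧
          A ≠ LieSubalgebra.lieSpan F H {h} ∧ A ≤ P} = q) := by
  classical
  -- ## Basis and coordinates
  have hrange : Set.range ![e, f, h] = {e, f, h} := by
    ext x; simp [Fin.exists_fin_succ]; tauto
  have hb3 : Fintype.card (Fin 3) = finrank F H := by simp [hdim]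
  have btop : ⊤ ≤ Submodule.span F (Set.range ![e, f, h]) := by rw [hrange, hspan]
  set b : Basis (Fin 3) F H := basisOfTopLeSpanOfCardEqFinrank ![e, f, h] btop hb3 with hbdef
  have hb : ⇑b = ![e, f, h] := coe_basisOfTopLeSpanOfCardEqFinrank _ _ _
  haveI : FiniteDimensional F H := Module.Finite.of_basis b
  have hb0 : b 0 = e := by rw [hb]; rfl
  have hb1 : b 1 = f := by rw [hb]; rfl
  have hb2 : b 2 = h := by rw [hb]; rfl
  set r : H → Fin 3 → F := fun x i => b.repr x i with hrdef
  have hexp : ∀ x : H, x = r x 0 • e + r x 1 • f + r x 2 • h := by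
    intro x
    have := b.sum_repr x
    rw [Fin.sum_univ_three, hb0, hb1, hb2] at this
    exact this.symm
  have hre : r e 0 = 1 ∧ r e 1 = 0 ∧ r e 2 = 0 := by
    rw [hrdef]; rw [← hb0]; simp [b.repr_self, Finsupp.single_apply]
  have hrf : r f 0 = 0 ∧ r f 1 = 1 ∧ r f 2 = 0 := by
    rw [hrdef]; rw [← hb1]; simp [b.repr_self, Finsupp.single_apply]
  have hrh : r h 0 = 0 ∧ r h 1 = 0 ∧ r h 2 = 1 := by
    rw [hrdef]; rw [← hb2]; simp [b.repr_self, Finsupp.single_apply]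
  obtain ⟨hre0, hre1, hre2⟩ := hre
  obtain ⟨hrf0, hrf1, hrf2⟩ := hrf
  obtain ⟨hrh0, hrh1, hrh2⟩ := hrh
  have hrlin : ∀ (c d : F) (x y : H) (i : Fin 3), r (c • x + d • y) i = c * r x i + d * r y i := by
    intro c d x y i; simp [hrdef]
  have hrsmul : ∀ (c : F) (x : H) (i : Fin 3), r (c • x) i = c * r x i := by
    intro c x i; simp [hrdef]
  have hrsub : ∀ (u v : H) (i : Fin 3), r (u - v) i = r u i - r v i := by
    intro u v i; simp [hrdef]
  have hcoord_ext : ∀ u v : H, r u 0 = r v 0 → r u 1 = r v 1 → r u 2 = r v 2 → u = v := by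
    intro u v h0 h1 h2
    rw [hexp u, hexp v, h0, h1, h2]
  have hfe : ⁅f, e⁆ = -h := by rw [← lie_skew, hef]
  have hhe : ⁅h, e⁆ = 0 := by rw [← lie_skew, heh, neg_zero]
  have hhf : ⁅h, f⁆ = 0 := by rw [← lie_skew, hfh, neg_zero]
  have key : ∀ x y : H, ⁅x, y⁆ = (r x 0 * r y 1 - r y 0 * r x 1) • h := by
    intro x y
    conv_lhs => rw [hexp x, hexp y]
    simp only [add_lie, lie_add, smul_lie, lie_smul, hef, heh, hfh, hfe, hhe, hhf,
      lie_self, smul_zero, smul_neg, smul_smul, add_zero, zero_add]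
    module
  have hne : h ≠ 0 := by have := b.ne_zero 2; rwa [hb2] at this
  -- membership in the center
  have hmemZ : ∀ z : H, z ∈ Submodule.span F {h} ↔ (r z 0 = 0 ∧ r z 1 = 0) := by
    intro z
    constructor
    · intro hz
      obtain ⟨t, ht⟩ := Submodule.mem_span_singleton.mp hz
      rw [← ht, hrsmul, hrsmul, hrh0, hrh1]
      simp
    · rintro ⟨h0, h1⟩
      have := hexp z
      rw [h0, h1] at this
      simp only [zero_smul, zero_add] at this
      exact Submodule.mem_span_singleton.mpr ⟨r z 2, this.symm⟩
  -- closure lemmas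
  have hclose : ∀ W : Submodule F H, h ∈ W → ∀ x ∈ W, ∀ y ∈ W, ⁅x, y⁆ ∈ W := by
    intro W hW x _ y _
    rw [key x y]; exact W.smul_mem _ hW
  have hcloseline : ∀ w : H, ∀ x ∈ Submodule.span F {w}, ∀ y ∈ Submodule.span F {w},
      ⁅x, y⁆ ∈ Submodule.span F {w} := by
    intro w x hx y hy
    obtain ⟨a, ha⟩ := Submodule.mem_span_singleton.mp hx
    obtain ⟨c, hc⟩ := Submodule.mem_span_singleton.mp hy
    rw [← ha, ← hc]
    simp only [smul_lie, lie_smul, lie_self, smul_zero]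
    exact Submodule.zero_mem _
  -- the center as an explicit subalgebra
  set Zs : LieSubalgebra F H :=
    subalgOf F H (Submodule.span F {h}) (hclose _ (Submodule.mem_span_singleton_self h)) with hZsdef
  have hZsmem : ∀ z : H, z ∈ Zs ↔ z ∈ Submodule.span F {h} := fun _ => Iff.rfl
  have hZ : LieSubalgebra.lieSpan F H {h} = Zs := by
    apply le_antisymm
    · exact LieSubalgebra.lieSpan_le.mpr (Set.singleton_subset_iff.mpr
        (Submodule.mem_span_singleton_self h))
    · intro z hz
      obtain ⟨t, ht⟩ := Submodule.mem_span_singleton.mp ((hZsmem z).mp hz)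
      rw [← ht]
      exact (LieSubalgebra.lieSpan F H {h}).smul_mem t (LieSubalgebra.subset_lieSpan rfl)
  have hZsub : Zs.toSubmodule = Submodule.span F {h} := rfl
  -- dependence lemma
  have hdep : ∀ x y : H, r x 0 * r y 1 - r y 0 * r x 1 = 0 → x ∉ Submodule.span F {h} →
      y ∈ Submodule.span F {x, h} := by
    intro x y hdet hx
    have hx' : ¬(r x 0 = 0 ∧ r x 1 = 0) := fun hc => hx ((hmemZ x).mpr hc)
    have main : ∀ t : F, (1 : F) • y + (-t) • x ∈ Submodule.span F {h} →
        y ∈ Submodule.span F {x, h} := by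
      intro t hz
      obtain ⟨s, hs⟩ := Submodule.mem_span_singleton.mp hz
      refine Submodule.mem_span_pair.mpr ⟨t, s, ?_⟩
      linear_combination (norm := module) hs
    by_cases h0 : r x 0 = 0
    · have h1 : r x 1 ≠ 0 := fun hc => hx' ⟨h0, hc⟩
      have hy0 : r y 0 = 0 := by
        rw [h0, zero_mul, zero_sub, neg_eq_zero] at hdet
        rcases mul_eq_zero.mp hdet with h' | h'
        · exact h'
        · exact absurd h' h1
      apply main (r y 1 / r x 1)
      apply (hmemZ _).mpr
      constructor
      · rw [hrlin, h0, hy0]; ring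
      · rw [hrlin]; field_simp; ring
    · apply main (r y 0 / r x 0)
      apply (hmemZ _).mpr
      constructor
      · rw [hrlin]; field_simp; ring
      · rw [hrlin]; field_simp; linear_combination hdet
  -- dimension of planes spanned by x and h
  have hrange2 : ∀ u v : H, Set.range ![u, v] = {u, v} := by
    intro u v; ext z; simp [Fin.exists_fin_succ]; tauto
  have hpair : ∀ x : H, x ∉ Submodule.span F {h} → finrank F (Submodule.span F {x, h}) = 2 := by
    intro x hx
    have hind : LinearIndependent F ![x, h] := by
      rw [LinearIndependent.pair_iff]
      intro s t hst
      by_cases hs : s = 0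
      · rw [hs, zero_smul, zero_add] at hst
        exact ⟨hs, by rcases smul_eq_zero.mp hst with h' | h' <;> [exact h'; exact absurd h' hne]⟩
      · exfalso
        apply hx
        have hx2 : s • x = -(t • h) := eq_neg_of_add_eq_zero_left hst
        have hx3 : x = (s⁻¹ * (-t)) • h := by
          have h4 := congrArg (fun z => s⁻¹ • z) hx2
          simp only [smul_smul, inv_mul_cancel₀ hs, one_smul] at h4
          rw [h4]; module
        rw [hx3]
        exact Submodule.smul_mem _ _ (Submodule.mem_span_singleton_self h)
    have h2 := finrank_span_eq_card hind
    rw [hrange2 x h] at h2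
    simpa using h2
  -- every 2-dimensional subalgebra contains h
  have hplane : ∀ P : LieSubalgebra F H, finrank F P = 2 →
      ∃ x, x ∉ Submodule.span F {h} ∧ P.toSubmodule = Submodule.span F {x, h} := by
    intro P hP2
    have hP2' : finrank F P.toSubmodule = 2 := hP2
    -- find x ∈ P not in span {h}
    have hxex : ∃ x ∈ P.toSubmodule, x ∉ Submodule.span F {h} := by
      by_contra hc
      push_neg at hc
      have hle : P.toSubmodule ≤ Submodule.span F {h} := fun z hz => hc z hz
      have := Submodule.finrank_mono hle
      rw [hP2', finrank_span_singleton hne] at this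
      omega
    obtain ⟨x, hxP, hx⟩ := hxex
    have hhP : h ∈ P.toSubmodule := by
      by_cases hc : P.toSubmodule ≤ Submodule.span F {x, h}
      · have : P.toSubmodule = Submodule.span F {x, h} := by
          apply Submodule.eq_of_le_of_finrank_le hc
          rw [hpair x hx, hP2']
        rw [this]
        exact Submodule.subset_span (Set.mem_insert_of_mem _ rfl)
      · obtain ⟨y, hyP, hy⟩ := Set.not_subset.mp hc
        have hdet : r x 0 * r y 1 - r y 0 * r x 1 ≠ 0 := by
          intro hd
          exact hy (hdep x y hd hx)
        have hlie : ⁅x, y⁆ ∈ P.toSubmodule := P.lie_mem hxP hyP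
        rw [key x y] at hlie
        have : h = (r x 0 * r y 1 - r y 0 * r x 1)⁻¹ •
            ((r x 0 * r y 1 - r y 0 * r x 1) • h) := by
          rw [smul_smul, inv_mul_cancel₀ hdet, one_smul]
        rw [this]
        exact Submodule.smul_mem _ _ hlie
    refine ⟨x, hx, ?_⟩
    have hle : Submodule.span F {x, h} ≤ P.toSubmodule := by
      rw [Submodule.span_le, Set.insert_subset_iff, Set.singleton_subset_iff]
      exact ⟨hxP, hhP⟩
    exact (Submodule.eq_of_le_of_finrank_le hle (by rw [hpair x hx, hP2'])).symm
  -- generators of 1-dimensional subalgebras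
  have hline1 : ∀ A : LieSubalgebra F H, finrank F A = 1 →
      ∃ x : H, x ≠ 0 ∧ A.toSubmodule = Submodule.span F {x} := by
    intro A hA1
    have hA1' : finrank F A.toSubmodule = 1 := hA1
    have hAne : A.toSubmodule ≠ ⊥ := by
      intro hc
      rw [show finrank F A = finrank F A.toSubmodule from rfl, hc] at hA1
      simp at hA1
    obtain ⟨x, hxA, hx0⟩ := Submodule.exists_mem_ne_zero_of_ne_bot hAne
    refine ⟨x, hx0, ?_⟩
    have hle : Submodule.span F {x} ≤ A.toSubmodule := by
      rw [Submodule.span_le, Set.singleton_subset_iff]; exact hxA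
    exact (Submodule.eq_of_le_of_finrank_le hle (by rw [finrank_span_singleton hx0, hA1'])).symm
  -- generator of a noncentral line is noncentral
  have hgen_nc : ∀ (A : LieSubalgebra F H) (x : H), x ≠ 0 →
      A.toSubmodule = Submodule.span F {x} → A ≠ LieSubalgebra.lieSpan F H {h} →
      x ∉ Submodule.span F {h} := by
    intro A x hx0 hAx hAZ hxh
    apply hAZ
    rw [hZ]
    apply LieSubalgebra.toSubmodule_injective
    rw [hAx, hZsub]
    obtain ⟨t, ht⟩ := Submodule.mem_span_singleton.mp hxh
    have ht0 : t ≠ 0 := by rintro rfl; rw [zero_smul] at ht; exact hx0 ht.symm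
    rw [← ht]
    exact Submodule.span_singleton_smul_eq (isUnit_iff_ne_zero.mpr ht0) h
  -- ## Conversions
  have htopsub : (⊤ : LieSubalgebra F H).toSubmodule = ⊤ := rfl
  have hfinrank_top : finrank F ((⊤ : LieSubalgebra F H)) = 3 := by
    rw [show finrank F ((⊤ : LieSubalgebra F H)) = finrank F ((⊤ : Submodule F H)) from rfl,
      finrank_top, hdim]
  have hspan2 : ∀ u v : H, u ∈ Submodule.span F {v, h} → v ∈ Submodule.span F {u, h} →
      Submodule.span F {u, h} = Submodule.span F {v, h} := by
    intro u v hu hv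
    apply le_antisymm <;> rw [Submodule.span_le, Set.insert_subset_iff, Set.singleton_subset_iff]
    · exact ⟨hu, Submodule.subset_span (Set.mem_insert_of_mem _ rfl)⟩
    · exact ⟨hv, Submodule.subset_span (Set.mem_insert_of_mem _ rfl)⟩
  refine ⟨?_, ?_, ?_, ?_⟩
  · -- ## Part A : the center is isolated
    intro B hbot htopB hBZ hcon
    rw [hZ] at hcon
    have hhW : h ∈ Submodule.span F {h} ⊔ B.toSubmodule :=
      Submodule.mem_sup_left (Submodule.mem_span_singleton_self h)
    have hZS : Zs ≤ subalgOf F H (Submodule.span F {h} ⊔ B.toSubmodule) (hclose _ hhW) :=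
      (le_sup_left : Submodule.span F {h} ≤ Submodule.span F {h} ⊔ B.toSubmodule)
    have hBS : B ≤ subalgOf F H (Submodule.span F {h} ⊔ B.toSubmodule) (hclose _ hhW) :=
      (le_sup_right : B.toSubmodule ≤ Submodule.span F {h} ⊔ B.toSubmodule)
    have hsupmod : Submodule.span F {h} ⊔ B.toSubmodule = ⊤ := by
      rw [eq_top_iff]
      intro z _
      exact (hcon ▸ sup_le hZS hBS) (LieSubalgebra.mem_top z)
    have hBne : B.toSubmodule ≠ ⊤ := by
      intro hc
      exact htopB (LieSubalgebra.toSubmodule_injective (hc.trans htopsub.symm))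
    have hBne' : B.toSubmodule ≠ ⊥ := by
      intro hc
      exact hbot (LieSubalgebra.toSubmodule_injective hc)
    have hlt : finrank F B.toSubmodule < 3 := by
      have := Submodule.finrank_lt hBne
      rwa [hdim] at this
    have hpos : finrank F B.toSubmodule ≠ 0 := fun hc => hBne' (Submodule.finrank_eq_zero.mp hc)
    have hcases : finrank F B.toSubmodule = 1 ∨ finrank F B.toSubmodule = 2 := by omega
    rcases hcases with hB1 | hB2
    · -- B is a line
      obtain ⟨y, hy0, hBy⟩ := hline1 B hB1
      have hyZ : y ∉ Submodule.span F {h} := hgen_nc B y hy0 hBy hBZ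
      rw [hBy] at hsupmod
      rw [← Submodule.span_union, Set.singleton_union] at hsupmod
      have h3 : finrank F (Submodule.span F ({h, y} : Set H)) = 3 := by
        rw [hsupmod, finrank_top, hdim]
      rw [Set.pair_comm h y, hpair y hyZ] at h3
      omega
    · -- B is a plane hence contains h
      obtain ⟨x, hx, hBx⟩ := hplane B hB2
      have hhB : h ∈ B.toSubmodule := by
        rw [hBx]; exact Submodule.subset_span (Set.mem_insert_of_mem _ rfl)
      have hle : Submodule.span F {h} ≤ B.toSubmodule := by
        rw [Submodule.span_le, Set.singleton_subset_iff]; exact hhB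
      rw [sup_eq_right.mpr hle] at hsupmod
      exact hBne hsupmod
  · -- ## Part B : adjacency iff no common plane
    intro A B hA1 hB1 hAZ hBZ hAB
    obtain ⟨x, hx0, hAx⟩ := hline1 A hA1
    obtain ⟨y, hy0, hBy⟩ := hline1 B hB1
    have hxZ : x ∉ Submodule.span F {h} := hgen_nc A x hx0 hAx hAZ
    have hyZ : y ∉ Submodule.span F {h} := hgen_nc B y hy0 hBy hBZ
    have hxA : x ∈ A := by
      show x ∈ A.toSubmodule
      rw [hAx]; exact Submodule.mem_span_singleton_self x
    have hyB : y ∈ B := by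
      show y ∈ B.toSubmodule
      rw [hBy]; exact Submodule.mem_span_singleton_self y
    constructor
    · rintro hsup P hP2 ⟨hAP, hBP⟩
      have hle : A ⊔ B ≤ P := sup_le hAP hBP
      rw [hsup] at hle
      have hPtop : P = ⊤ := le_antisymm le_top hle
      rw [hPtop, hfinrank_top] at hP2
      omega
    · intro hforall
      by_cases hw : r x 0 * r y 1 - r y 0 * r x 1 = 0
      · -- common plane exists : contradiction with hforall
        exfalso
        refine hforall (subalgOf F H (Submodule.span F {x, h})
          (hclose _ (Submodule.subset_span (Set.mem_insert_of_mem _ rfl))))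
          (by exact hpair x hxZ) ⟨?_, ?_⟩
        · show A.toSubmodule ≤ Submodule.span F {x, h}
          rw [hAx, Submodule.span_le, Set.singleton_subset_iff]
          exact Submodule.subset_span (Set.mem_insert x {h})
        · show B.toSubmodule ≤ Submodule.span F {x, h}
          rw [hBy, Submodule.span_le, Set.singleton_subset_iff]
          exact hdep x y hw hxZ
      · -- the two lines generate everything
        have hxM : x ∈ A ⊔ B := le_sup_left (α := LieSubalgebra F H) (a := A) (b := B) hxA
        have hyM : y ∈ A ⊔ B := le_sup_right (α := LieSubalgebra F H) (a := A) (b := B) hyB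
        have hlieM : ⁅x, y⁆ ∈ A ⊔ B := (A ⊔ B).lie_mem hxM hyM
        rw [key x y] at hlieM
        have hhM : h ∈ A ⊔ B := by
          have h5 : h = (r x 0 * r y 1 - r y 0 * r x 1)⁻¹ •
              ((r x 0 * r y 1 - r y 0 * r x 1) • h) := by
            rw [smul_smul, inv_mul_cancel₀ hw, one_smul]
          rw [h5]
          exact (A ⊔ B).smul_mem _ hlieM
        have huM : x - r x 2 • h ∈ (A ⊔ B).toSubmodule :=
          sub_mem hxM (Submodule.smul_mem _ _ hhM)
        have hvM : y - r y 2 • h ∈ (A ⊔ B).toSubmodule :=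
          sub_mem hyM (Submodule.smul_mem _ _ hhM)
        have hidE : r y 1 • (x - r x 2 • h) - r x 1 • (y - r y 2 • h)
            = (r x 0 * r y 1 - r y 0 * r x 1) • e := by
          apply hcoord_ext <;>
            simp only [hrsub, hrsmul, hrh0, hrh1, hrh2, hre0, hre1, hre2] <;> ring
        have hidF : r x 0 • (y - r y 2 • h) - r y 0 • (x - r x 2 • h)
            = (r x 0 * r y 1 - r y 0 * r x 1) • f := by
          apply hcoord_ext <;>
            simp only [hrsub, hrsmul, hrh0, hrh1, hrh2, hrf0, hrf1, hrf2] <;> ring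
        have heM : e ∈ (A ⊔ B).toSubmodule := by
          have hm : r y 1 • (x - r x 2 • h) - r x 1 • (y - r y 2 • h) ∈ (A ⊔ B).toSubmodule :=
            sub_mem (Submodule.smul_mem _ _ huM) (Submodule.smul_mem _ _ hvM)
          rw [hidE] at hm
          have h5 : e = (r x 0 * r y 1 - r y 0 * r x 1)⁻¹ •
              ((r x 0 * r y 1 - r y 0 * r x 1) • e) := by
            rw [smul_smul, inv_mul_cancel₀ hw, one_smul]
          rw [h5]
          exact Submodule.smul_mem _ _ hm
        have hfM : f ∈ (A ⊔ B).toSubmodule := by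
          have hm : r x 0 • (y - r y 2 • h) - r y 0 • (x - r x 2 • h) ∈ (A ⊔ B).toSubmodule :=
            sub_mem (Submodule.smul_mem _ _ hvM) (Submodule.smul_mem _ _ huM)
          rw [hidF] at hm
          have h5 : f = (r x 0 * r y 1 - r y 0 * r x 1)⁻¹ •
              ((r x 0 * r y 1 - r y 0 * r x 1) • f) := by
            rw [smul_smul, inv_mul_cancel₀ hw, one_smul]
          rw [h5]
          exact Submodule.smul_mem _ _ hm
        apply LieSubalgebra.toSubmodule_injective
        rw [htopsub, eq_top_iff, ← hspan, Submodule.span_le]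
        intro z hz
        rcases hz with rfl | hz
        · exact heM
        · rcases hz with rfl | hz
          · exact hfM
          · rw [Set.mem_singleton_iff] at hz
            subst hz
            exact hhM
  · -- ## Part C : there are q + 1 planes
    have hrgen_some : ∀ t : F, r (e + t • f) 0 = 1 ∧ r (e + t • f) 1 = t ∧ r (e + t • f) 2 = 0 := by
      intro t
      have h5 : ∀ i, r (e + t • f) i = r e i + t * r f i := by
        intro i
        have := hrlin 1 t e f i
        rw [one_smul] at this
        rw [this]; ring
      rw [h5, h5, h5, hre0, hre1, hre2, hrf0, hrf1, hrf2]
      refine ⟨by ring, by ring, by ring⟩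
    have hgenZ : ∀ c : Option F, (c.elim f (fun t => e + t • f)) ∉ Submodule.span F {h} := by
      intro c hc
      cases c with
      | none =>
        obtain ⟨h5, h6⟩ := (hmemZ _).mp hc
        simp only [Option.elim] at h6
        rw [hrf1] at h6
        exact one_ne_zero h6
      | some t =>
        obtain ⟨h5, h6⟩ := (hmemZ _).mp hc
        simp only [Option.elim] at h5
        rw [(hrgen_some t).1] at h5
        exact one_ne_zero h5
    have hbij : Function.Bijective (fun c : Option F =>
        (⟨subalgOf F H (Submodule.span F {c.elim f (fun t => e + t • f), h})
          (hclose _ (Submodule.subset_span (Set.mem_insert_of_mem _ rfl))),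
          by exact hpair _ (hgenZ c)⟩ : {P : LieSubalgebra F H // finrank F P = 2})) := by
      constructor
      · intro c c' hcc
        have h1 : Submodule.span F {c.elim f (fun t => e + t • f), h}
            = Submodule.span F {c'.elim f (fun t => e + t • f), h} :=
          congrArg (fun S : {P : LieSubalgebra F H // finrank F P = 2} =>
            LieSubalgebra.toSubmodule S.val) hcc
        have h2 : c.elim f (fun t => e + t • f) ∈
            Submodule.span F {c'.elim f (fun t => e + t • f), h} := by
          rw [← h1]
          exact Submodule.subset_span (Set.mem_insert _ _)
        obtain ⟨a, s, has⟩ := Submodule.mem_span_pair.mp h2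
        have hco : ∀ i, a * r (c'.elim f (fun t => e + t • f)) i + s * r h i
            = r (c.elim f (fun t => e + t • f)) i := by
          intro i
          rw [← hrlin]
          rw [has]
        cases c with
        | none =>
          cases c' with
          | none => rfl
          | some t' =>
            exfalso
            have h3 := hco 0
            have h4 := hco 1
            simp only [Option.elim] at h3 h4
            rw [(hrgen_some t').1, hrh0, hrf0] at h3
            rw [(hrgen_some t').2.1, hrh1, hrf1] at h4
            simp only [mul_one, mul_zero, add_zero] at h3 h4
            rw [h3] at h4
            simp at h4
        | some t =>
          cases c' with
          | none =>
            exfalso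
            have h3 := hco 0
            simp only [Option.elim] at h3
            rw [(hrgen_some t).1, hrh0, hrf0] at h3
            simp at h3
          | some t' =>
            have h3 := hco 0
            have h4 := hco 1
            simp only [Option.elim] at h3 h4
            rw [(hrgen_some t').1, hrh0, (hrgen_some t).1] at h3
            rw [(hrgen_some t').2.1, hrh1, (hrgen_some t).2.1] at h4
            simp only [mul_one, mul_zero, add_zero] at h3 h4
            rw [h3, one_mul] at h4
            rw [h4]
      · rintro ⟨P, hP2⟩
        obtain ⟨x, hx, hPx⟩ := hplane P hP2
        have hx' : ¬(r x 0 = 0 ∧ r x 1 = 0) := fun hc => hx ((hmemZ x).mpr hc)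
        by_cases h0 : r x 0 = 0
        · have h1 : r x 1 ≠ 0 := fun hc => hx' ⟨h0, hc⟩
          refine ⟨none, Subtype.ext (LieSubalgebra.toSubmodule_injective ?_)⟩
          show Submodule.span F {f, h} = P.toSubmodule
          rw [hPx]
          apply hspan2
          · -- f ∈ span {x, h}
            refine Submodule.mem_span_pair.mpr ⟨(r x 1)⁻¹, -(r x 2 / r x 1), ?_⟩
            apply hcoord_ext <;>
              simp only [hrlin, hrsmul, hrh0, hrh1, hrh2, hrf0, hrf1, hrf2, hrsub] <;>
              field_simp [h0] <;> simp [h0]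
          · -- x ∈ span {f, h}
            refine Submodule.mem_span_pair.mpr ⟨r x 1, r x 2, ?_⟩
            apply hcoord_ext <;>
              simp only [hrlin, hrsmul, hrh0, hrh1, hrh2, hrf0, hrf1, hrf2, hrsub] <;>
              field_simp [h0] <;> simp [h0]
        · refine ⟨some (r x 1 / r x 0), Subtype.ext (LieSubalgebra.toSubmodule_injective ?_)⟩
          show Submodule.span F {e + (r x 1 / r x 0) • f, h} = P.toSubmodule
          rw [hPx]
          apply hspan2
          · -- e + (x1/x0) f ∈ span {x, h}
            refine Submodule.mem_span_pair.mpr ⟨(r x 0)⁻¹, -(r x 2 / r x 0), ?_⟩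
            apply hcoord_ext <;>
              simp only [hrlin, hrsmul, hrh0, hrh1, hrh2, (hrgen_some _).1,
                (hrgen_some _).2.1, (hrgen_some _).2.2] <;>
              field_simp [h0] <;> ring
          · -- x ∈ span {e + (x1/x0) f, h}
            refine Submodule.mem_span_pair.mpr ⟨r x 0, r x 2, ?_⟩
            apply hcoord_ext <;>
              simp only [hrlin, hrsmul, hrh0, hrh1, hrh2, (hrgen_some _).1,
                (hrgen_some _).2.1, (hrgen_some _).2.2] <;>
              field_simp [h0] <;> ring
    have := Nat.card_eq_of_bijective _ hbij
    rw [← this, Nat.card_eq_fintype_card, Fintype.card_option, hq]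
  · -- ## Part D : each plane contains exactly q noncentral lines
    intro P hP2
    obtain ⟨x, hx, hPx⟩ := hplane P hP2
    have hx' : ¬(r x 0 = 0 ∧ r x 1 = 0) := fun hc => hx ((hmemZ x).mpr hc)
    have hxt0 : ∀ t : F, x + t • h ≠ 0 := by
      intro t hc
      apply hx
      have h5 : x = (-t) • h := by
        rw [neg_smul]
        exact eq_neg_of_add_eq_zero_left hc
      rw [h5]
      exact Submodule.smul_mem _ _ (Submodule.mem_span_singleton_self h)
    have hxtZ : ∀ t : F, (x + t • h) ∉ Submodule.span F {h} := by
      intro t hc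
      apply hx
      have h5 : x = (x + t • h) + (-t) • h := by module
      rw [h5]
      exact Submodule.add_mem _ hc
        (Submodule.smul_mem _ _ (Submodule.mem_span_singleton_self h))
    have hrxt : ∀ (t : F) (i : Fin 3), r (x + t • h) i = r x i + t * r h i := by
      intro t i
      have := hrlin 1 t x h i
      rw [one_smul] at this
      rw [this]; ring
    have hLne : ∀ t : F,
        subalgOf F H (Submodule.span F {x + t • h}) (hcloseline _) ≠ LieSubalgebra.lieSpan F H {h} := by
      intro t hc
      rw [hZ] at hc
      have h1 : Submodule.span F {x + t • h} = Submodule.span F {h} :=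
        congrArg LieSubalgebra.toSubmodule hc
      apply hxtZ t
      rw [← h1]
      exact Submodule.mem_span_singleton_self _
    have hLle : ∀ t : F,
        subalgOf F H (Submodule.span F {x + t • h}) (hcloseline _) ≤ P := by
      intro t
      show Submodule.span F {x + t • h} ≤ P.toSubmodule
      rw [hPx, Submodule.span_le, Set.singleton_subset_iff]
      exact Submodule.mem_span_pair.mpr ⟨1, t, by module⟩
    have hbij : Function.Bijective (fun t : F =>
        (⟨subalgOf F H (Submodule.span F {x + t • h}) (hcloseline _),
          by exact finrank_span_singleton (hxt0 t), hLne t, hLle t⟩ :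
          {A : LieSubalgebra F H // finrank F A = 1 ∧
            A ≠ LieSubalgebra.lieSpan F H {h} ∧ A ≤ P})) := by
      constructor
      · intro t t' htt
        have h1 : Submodule.span F {x + t • h} = Submodule.span F {x + t' • h} :=
          congrArg (fun S : {A : LieSubalgebra F H // finrank F A = 1 ∧
            A ≠ LieSubalgebra.lieSpan F H {h} ∧ A ≤ P} => LieSubalgebra.toSubmodule S.val) htt
        have h2 : x + t • h ∈ Submodule.span F {x + t' • h} := by
          rw [← h1]
          exact Submodule.mem_span_singleton_self _
        obtain ⟨a, ha⟩ := Submodule.mem_span_singleton.mp h2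
        have hco : ∀ i, a * (r x i + t' * r h i) = r x i + t * r h i := by
          intro i
          rw [← hrxt, ← hrxt, ← hrsmul, ha]
        have ha1 : a = 1 := by
          by_cases h0 : r x 0 = 0
          · have h1' : r x 1 ≠ 0 := fun hc => hx' ⟨h0, hc⟩
            have h6 := hco 1
            rw [hrh1] at h6
            simp only [mul_zero, add_zero] at h6
            exact mul_right_cancel₀ h1' (by rw [h6, one_mul])
          · have h6 := hco 0
            rw [hrh0] at h6
            simp only [mul_zero, add_zero] at h6
            exact mul_right_cancel₀ h0 (by rw [h6, one_mul])
        have h7 := hco 2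
        rw [ha1, one_mul, hrh2, mul_one, mul_one] at h7
        exact (add_left_cancel h7).symm
      · rintro ⟨A, hA1, hAZ, hAP⟩
        obtain ⟨y, hy0, hAy⟩ := hline1 A hA1
        have hyA : y ∈ A.toSubmodule := by
          rw [hAy]; exact Submodule.mem_span_singleton_self y
        have hyP : y ∈ Submodule.span F {x, h} := by
          rw [← hPx]
          exact hAP hyA
        obtain ⟨a, s, has⟩ := Submodule.mem_span_pair.mp hyP
        have ha0 : a ≠ 0 := by
          rintro rfl
          rw [zero_smul, zero_add] at has
          apply hAZ
          rw [hZ]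
          apply LieSubalgebra.toSubmodule_injective
          rw [hAy, hZsub]
          have hs0 : s ≠ 0 := by
            rintro rfl
            rw [zero_smul] at has
            exact hy0 has.symm
          rw [← has]
          exact Submodule.span_singleton_smul_eq (isUnit_iff_ne_zero.mpr hs0) h
        refine ⟨s / a, Subtype.ext (LieSubalgebra.toSubmodule_injective ?_)⟩
        show Submodule.span F {x + (s / a) • h} = A.toSubmodule
        rw [hAy]
        have hsa : a * (s / a) = s := by field_simp
        have h5 : y = a • (x + (s / a) • h) := by
          rw [smul_add, smul_smul, hsa, ← has]
        rw [h5]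
        exact (Submodule.span_singleton_smul_eq (isUnit_iff_ne_zero.mpr ha0) _).symm
    have := Nat.card_eq_of_bijective _ hbij
    rw [← this, Nat.card_eq_fintype_card, hq]
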